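/- Let W ⊆ S^d V be a linear series of homogeneous forms of degree d (V an n-dimensional ℂ-vector space) admitting a direct sum decomposition: V = V_1 ⊕ V_2 and there are subspaces W_1 ⊆ S^d V_1, W_2 ⊆ S^d V_2 with W ⊆ W_1 ⊕ W_2 such that both projections W → W_1 and W → W_2 are isomorphisms. Then the apolar ideal W^⊥ = ∩_{F ∈ W} F^⊥ has at least dim_ℂ W minimal generators of degree d. -/

import Mathlib

/-!
Apolarity setup.  `S = ℂ[x_1,…,x_n]` and its dual ring `T = ℂ[α_1,…,α_n]` are both
realized as `MvPolynomial (Fin n) ℂ`; the apolarity action `Θ ⌟ F` (`contract Θ F`)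
lets `α_i` act as the partial differentiation operator `∂/∂x_i`.
-/

open MvPolynomial

noncomputable section Apolarity

/-- Partial derivatives on `ℂ[x_1,…,x_n]` commute. -/
lemma pderiv_pderiv_comm (n : ℕ) (i j : Fin n) (f : MvPolynomial (Fin n) ℂ) :
    pderiv i (pderiv j f) = pderiv j (pderiv i f) := by
  induction f using MvPolynomial.induction_on with
  | C a => simp
  | add p q hp hq => simp [hp, hq]
  | mul_X p k hp =>
    rcases eq_or_ne i k with rfl | hik
    · rcases eq_or_ne j i with rfl | hjk
      · rfl
      · simp only [pderiv_mul, pderiv_X_self, pderiv_X_of_ne hjk, pderiv_X_of_ne hjk.symm,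
          map_add, map_zero, map_one, Derivation.map_one_eq_zero, mul_one, mul_zero,
          add_zero, zero_add, hp]
    · rcases eq_or_ne j k with rfl | hjk
      · simp only [pderiv_mul, pderiv_X_self, pderiv_X_of_ne hik, pderiv_X_of_ne hik.symm,
          map_add, map_zero, map_one, Derivation.map_one_eq_zero, mul_one, mul_zero,
          add_zero, zero_add, hp]
      · simp only [pderiv_mul, pderiv_X_of_ne hik.symm, pderiv_X_of_ne hjk.symm, map_add,
          map_zero, mul_zero, add_zero, zero_add, hp]

variable (n : ℕ)

/-- The endomorphism `∂/∂x_i` of `S = ℂ[x_1,…,x_n]`. -/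
def derOp (i : Fin n) : Module.End ℂ (MvPolynomial (Fin n) ℂ) :=
  (pderiv i).toLinearMap

lemma derOp_commute (i j : Fin n) : Commute (derOp n i) (derOp n j) :=
  LinearMap.ext fun f => pderiv_pderiv_comm n i j f

/-- The commuting product of the operators `(∂/∂x_i)^(m i)`. -/
def piDiffHom : (Fin n → Multiplicative ℕ) →* Module.End ℂ (MvPolynomial (Fin n) ℂ) :=
  MonoidHom.noncommPiCoprod (fun i : Fin n => powersHom _ (derOp n i))
    (fun i j _ x y => ((derOp_commute n i j).pow_pow x y))

/-- The differential operator `∏ i, (∂/∂x_i)^(m i)` attached to an exponent vector `m`. -/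
def diffMonoidHom : Multiplicative (Fin n →₀ ℕ) →* Module.End ℂ (MvPolynomial (Fin n) ℂ) :=
  (piDiffHom n).comp
    (AddMonoidHom.toMultiplicative
      (Finsupp.coeFnAddHom : (Fin n →₀ ℕ) →+ (Fin n → ℕ)))

/-- The apolarity action of the dual ring `T = ℂ[α_1,…,α_n]` on `S = ℂ[x_1,…,x_n]`, as an
algebra homomorphism to differential operators: `α_i` acts as `∂/∂x_i`. -/
def apolarAlgHom :
    MvPolynomial (Fin n) ℂ →ₐ[ℂ] Module.End ℂ (MvPolynomial (Fin n) ℂ) :=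
  AddMonoidAlgebra.lift ℂ _ (Fin n →₀ ℕ) (diffMonoidHom n)

variable {n}

/-- The apolarity action `Θ ⌟ F`: apply to `F` the differential operator obtained from `Θ`
by substituting `∂/∂x_i` for the `i`-th (dual) variable. -/
def contract (Θ F : MvPolynomial (Fin n) ℂ) : MvPolynomial (Fin n) ℂ :=
  apolarAlgHom n Θ F

lemma apolarAlgHom_X (i : Fin n) : apolarAlgHom n (X i) = derOp n i := by
  classical
  have hX : (X i : MvPolynomial (Fin n) ℂ)
      = AddMonoidAlgebra.single (Finsupp.single i 1) (1 : ℂ) := rfl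
  rw [hX]
  rw [show apolarAlgHom n (AddMonoidAlgebra.single (Finsupp.single i 1) (1:ℂ))
      = (1:ℂ) • diffMonoidHom n (Multiplicative.ofAdd (Finsupp.single i 1)) from
    AddMonoidAlgebra.lift_single _ _ _]
  rw [one_smul]
  show piDiffHom n ((AddMonoidHom.toMultiplicative
        (Finsupp.coeFnAddHom : (Fin n →₀ ℕ) →+ (Fin n → ℕ)))
        (Multiplicative.ofAdd (Finsupp.single i 1))) = derOp n i
  have harg : (AddMonoidHom.toMultiplicative
        (Finsupp.coeFnAddHom : (Fin n →₀ ℕ) →+ (Fin n → ℕ)))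
        (Multiplicative.ofAdd (Finsupp.single i 1))
      = Pi.mulSingle (M := fun _ : Fin n => Multiplicative ℕ) i (Multiplicative.ofAdd 1) := by
    funext j
    rcases eq_or_ne j i with rfl | hj
    · show Multiplicative.ofAdd ((Finsupp.single j 1 : Fin n →₀ ℕ) j)
        = Pi.mulSingle (M := fun _ : Fin n => Multiplicative ℕ) j (Multiplicative.ofAdd 1) j
      rw [Finsupp.single_eq_same, Pi.mulSingle_eq_same]
    · show Multiplicative.ofAdd ((Finsupp.single i 1 : Fin n →₀ ℕ) j)
        = Pi.mulSingle (M := fun _ : Fin n => Multiplicative ℕ) i (Multiplicative.ofAdd 1) j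
      rw [Finsupp.single_eq_of_ne hj, Pi.mulSingle_eq_of_ne hj]
      exact ofAdd_zero
  refine (congrArg (piDiffHom n) harg).trans ?_
  refine (MonoidHom.noncommPiCoprod_mulSingle (ϕ := fun i : Fin n => powersHom _ (derOp n i))
    i (Multiplicative.ofAdd 1)).trans ?_
  rfl

/-- Sanity check: the dual variable `α_i` acts on `F` as `∂F/∂x_i`. -/
@[simp] lemma contract_X (i : Fin n) (F : MvPolynomial (Fin n) ℂ) :
    contract (X i) F = pderiv i F := by
  rw [contract, apolarAlgHom_X]; rfl

/-- The apolar (annihilator) ideal `F^⊥ = {Θ ∈ T : Θ ⌟ F = 0}` of a polynomial `F`. -/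
def apolarIdeal (F : MvPolynomial (Fin n) ℂ) : Ideal (MvPolynomial (Fin n) ℂ) where
  carrier := {Θ | contract Θ F = 0}
  zero_mem' := by simp [contract]
  add_mem' := by
    intro a b ha hb
    simp only [Set.mem_setOf_eq, contract, map_add, LinearMap.add_apply] at *
    rw [ha, hb, add_zero]
  smul_mem' := by
    intro c x hx
    simp only [Set.mem_setOf_eq, smul_eq_mul, contract, map_mul, Module.End.mul_apply] at *
    rw [hx, map_zero]

@[simp] lemma mem_apolarIdeal {Θ F : MvPolynomial (Fin n) ℂ} :
    Θ ∈ apolarIdeal F ↔ contract Θ F = 0 := Iff.rfl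

variable (n)

/-- The irrelevant maximal ideal `m = ⟨α_1,…,α_n⟩` of `T`. -/
def irrIdeal : Ideal (MvPolynomial (Fin n) ℂ) :=
  Ideal.span (Set.range X)

variable {n}

/-- The homogeneous ideal `I` has a minimal generator of degree `k`, i.e. `(I/mI)_k ≠ 0`:
there is a homogeneous element of `I` of degree `k` not belonging to `m * I`. -/
def HasMinGenOfDegree (I : Ideal (MvPolynomial (Fin n) ℂ)) (k : ℕ) : Prop :=
  ∃ Θ, Θ ∈ I ∧ Θ.IsHomogeneous k ∧ Θ ∉ irrIdeal n * I

/-- The homogeneous ideal `I` has at least `r` minimal generators of degree `k`, i.e.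
`dim_ℂ (I/mI)_k ≥ r`: there are `r` homogeneous degree-`k` elements of `I` that are
linearly independent modulo `m * I`. -/
def MinGensAtLeast (I : Ideal (MvPolynomial (Fin n) ℂ)) (k r : ℕ) : Prop :=
  ∃ Θ : Fin r → MvPolynomial (Fin n) ℂ,
    (∀ i, Θ i ∈ I ∧ (Θ i).IsHomogeneous k) ∧
    ∀ c : Fin r → ℂ, (∑ i, c i • Θ i) ∈ irrIdeal n * I → ∀ i, c i = 0

/-- `F` is an `s`-fold direct sum of degree `d`: `F = F_1 + ⋯ + F_s` where the `F_i` are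
nonzero degree-`d` forms in independent subspaces `V_i` of the space of linear forms with
`V = V_1 ⊕ ⋯ ⊕ V_s` (i.e. in disjoint sets of variables, up to linear change of variables;
`F_i ∈ S^d V_i` is expressed as membership in the subalgebra generated by `V_i`). -/
def IsSFoldDirectSum (F : MvPolynomial (Fin n) ℂ) (d s : ℕ) : Prop :=
  ∃ (V : Fin s → Submodule ℂ (MvPolynomial (Fin n) ℂ))
    (G : Fin s → MvPolynomial (Fin n) ℂ),
    (∀ i, V i ≤ homogeneousSubmodule (Fin n) ℂ 1) ∧
    iSupIndep V ∧
    (⨆ i, V i) = homogeneousSubmodule (Fin n) ℂ 1 ∧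
    (∀ i, G i ≠ 0 ∧ (G i).IsHomogeneous d ∧ G i ∈ Algebra.adjoin ℂ (V i : Set _)) ∧
    F = ∑ i, G i

/-- `F` is a direct sum: `F = F₁ + F₂` with `F₁ ∈ S^d V₁`, `F₂ ∈ S^d V₂` nonzero and
`V = V₁ ⊕ V₂`. -/
def IsDirectSum (F : MvPolynomial (Fin n) ℂ) (d : ℕ) : Prop :=
  IsSFoldDirectSum F d 2

/-- `F` is a limit (as `t → 0`) of `s`-fold direct sums of degree `d`. -/
def IsLimitOfSFoldDirectSums (F : MvPolynomial (Fin n) ℂ) (d s : ℕ) : Prop :=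
  ∃ G : ℂ → MvPolynomial (Fin n) ℂ,
    (∀ t : ℂ, t ≠ 0 → IsSFoldDirectSum (G t) d s) ∧
    ∀ m : Fin n →₀ ℕ,
      Filter.Tendsto (fun t => MvPolynomial.coeff m (G t))
        (nhdsWithin (0 : ℂ) {(0 : ℂ)}ᶜ) (nhds (MvPolynomial.coeff m F))

/-- `F` is a limit of direct sums. -/
def IsLimitOfDirectSums (F : MvPolynomial (Fin n) ℂ) (d : ℕ) : Prop :=
  IsLimitOfSFoldDirectSums F d 2

/-- `F` is concise: `(F^⊥)_1 = 0`, i.e. `F` cannot be written using fewer variables. -/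
def Concise (F : MvPolynomial (Fin n) ℂ) : Prop :=
  ∀ Θ : MvPolynomial (Fin n) ℂ, Θ.IsHomogeneous 1 → contract Θ F = 0 → Θ = 0

end Apolarity

/-- The apolar ideal `W^⊥ = ⋂_{F ∈ W} F^⊥` of a linear series `W`. -/
noncomputable def seriesApolarIdeal {n : ℕ} (W : Submodule ℂ (MvPolynomial (Fin n) ℂ)) :
    Ideal (MvPolynomial (Fin n) ℂ) :=
  ⨅ F ∈ W, apolarIdeal F

noncomputable section Helpers

open MvPolynomial Finsupp

variable {n : ℕ}

lemma contract_mul (p q F : MvPolynomial (Fin n) ℂ) :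
    contract (p * q) F = contract p (contract q F) := by
  simp only [contract, map_mul, Module.End.mul_apply]

lemma contract_C_left (a : ℂ) (F : MvPolynomial (Fin n) ℂ) :
    contract (C a) F = a • F := by
  have : (C a : MvPolynomial (Fin n) ℂ) = algebraMap ℂ _ a := rfl
  rw [contract, this, AlgHom.commutes]
  rfl

lemma contract_add_left (p q F : MvPolynomial (Fin n) ℂ) :
    contract (p + q) F = contract p F + contract q F := by
  simp only [contract, map_add, LinearMap.add_apply]

lemma contract_smul_left (a : ℂ) (p F : MvPolynomial (Fin n) ℂ) :
    contract (a • p) F = a • contract p F := by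
  rw [smul_eq_C_mul, contract_mul, contract_C_left]

lemma contract_sum_left {ι : Type*} (s : Finset ι) (f : ι → MvPolynomial (Fin n) ℂ)
    (F : MvPolynomial (Fin n) ℂ) :
    contract (∑ i ∈ s, f i) F = ∑ i ∈ s, contract (f i) F := by
  simp only [contract, map_sum, LinearMap.coe_sum, Finset.sum_apply]

lemma contract_add_right (p F G : MvPolynomial (Fin n) ℂ) :
    contract p (F + G) = contract p F + contract p G :=
  map_add _ _ _

lemma contract_zero_right (p : MvPolynomial (Fin n) ℂ) :
    contract p 0 = 0 := map_zero _

lemma contract_smul_right (a : ℂ) (p F : MvPolynomial (Fin n) ℂ) :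
    contract p (a • F) = a • contract p F :=
  map_smul _ _ _

lemma contract_sum_right {ι : Type*} (s : Finset ι) (p : MvPolynomial (Fin n) ℂ)
    (f : ι → MvPolynomial (Fin n) ℂ) :
    contract p (∑ i ∈ s, f i) = ∑ i ∈ s, contract p (f i) :=
  map_sum _ _ _

lemma contract_X_pow_mul (i : Fin n) (k : ℕ) (p F : MvPolynomial (Fin n) ℂ) :
    contract (X i ^ k * p) F = (derOp n i ^ k) (contract p F) := by
  rw [contract_mul]
  have : contract (X i ^ k) (contract p F)
      = (apolarAlgHom n (X i ^ k)) (contract p F) := rfl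
  rw [this, map_pow, apolarAlgHom_X]

lemma derOp_pow_monomial (i : Fin n) (k : ℕ) (m : Fin n →₀ ℕ) (c : ℂ) :
    (derOp n i ^ k) (monomial m c) =
      monomial (m - Finsupp.single i k) (c * (m i).descFactorial k) := by
  induction k with
  | zero => simp
  | succ k ih =>
    rw [pow_succ', Module.End.mul_apply, ih]
    have hder : derOp n i (monomial (m - Finsupp.single i k) (c * (m i).descFactorial k))
        = pderiv i (monomial (m - Finsupp.single i k) (c * (m i).descFactorial k)) := rfl
    rw [hder, pderiv_monomial]
    congr 1
    · rw [tsub_tsub, ← Finsupp.single_add]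
    · have happ : (m - Finsupp.single i k) i = m i - k := by
        rw [Finsupp.tsub_apply, Finsupp.single_eq_same]
      rw [happ, Nat.descFactorial_succ]
      push_cast
      ring

lemma contract_monomial (m m' : Fin n →₀ ℕ) (c c' : ℂ) :
    contract (monomial m c) (monomial m' c') =
      monomial (m' - m)
        ((∏ i, ((m' i).descFactorial (m i) : ℂ)) * c * c') := by
  classical
  induction m using Finsupp.induction with
  | zero =>
    rw [show (monomial (0 : Fin n →₀ ℕ) c : MvPolynomial (Fin n) ℂ) = C c from rfl,
      contract_C_left, smul_monomial]
    simp
  | single_add a b f haf hb ih =>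
    have hX : (monomial (Finsupp.single a b + f) c : MvPolynomial (Fin n) ℂ)
        = X a ^ b * monomial f c := by
      rw [X_pow_eq_monomial, monomial_mul, one_mul]
    rw [hX, contract_X_pow_mul, ih, derOp_pow_monomial]
    have hfa : f a = 0 := Finsupp.notMem_support_iff.mp haf
    have happ : (m' - f) a = m' a := by
      rw [Finsupp.tsub_apply, hfa, Nat.sub_zero]
    congr 1
    · rw [tsub_tsub, add_comm (Finsupp.single a b) f]
    · rw [happ]
      have hsplit : ∀ g : Fin n →₀ ℕ,
          (∏ i, ((m' i).descFactorial (g i) : ℂ))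
            = ((m' a).descFactorial (g a) : ℂ)
              * ∏ i ∈ Finset.univ.erase a, ((m' i).descFactorial (g i) : ℂ) := by
        intro g
        rw [← Finset.mul_prod_erase Finset.univ _ (Finset.mem_univ a)]
      rw [hsplit f, hsplit (Finsupp.single a b + f)]
      have h1 : ((Finsupp.single a b + f) a) = b := by
        rw [Finsupp.add_apply, Finsupp.single_eq_same, hfa, Nat.add_zero]
      have h2 : ∀ i ∈ Finset.univ.erase a,
          ((m' i).descFactorial ((Finsupp.single a b + f) i) : ℂ)
            = ((m' i).descFactorial (f i) : ℂ) := by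
        intro i hi
        have : (Finsupp.single a b) i = 0 :=
          Finsupp.single_eq_of_ne (Finset.ne_of_mem_erase hi)
        rw [Finsupp.add_apply, this, Nat.zero_add]
      rw [h1, Finset.prod_congr rfl h2, hfa]
      simp [Nat.descFactorial_zero]
      ring

lemma degree_eq_univ_sum (m : Fin n →₀ ℕ) : m.degree = ∑ i, m i := by
  rw [Finsupp.degree]
  exact Finset.sum_subset (Finset.subset_univ _)
    (fun i _ hi => Finsupp.notMem_support_iff.mp hi)

lemma contract_monomial_self (m : Fin n →₀ ℕ) (c c' : ℂ) :
    contract (monomial m c) (monomial m c') =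
      C ((∏ i, ((m i).factorial : ℂ)) * c * c') := by
  rw [contract_monomial, tsub_self]
  simp only [Nat.descFactorial_self]
  rfl

lemma contract_monomial_ne (m m' : Fin n →₀ ℕ) (hdeg : m.degree = m'.degree)
    (hne : m ≠ m') (c c' : ℂ) :
    contract (monomial m c) (monomial m' c') = 0 := by
  have hlt : ∃ i, m' i < m i := by
    by_contra hall
    push_neg at hall
    apply hne
    ext i
    by_contra hne'
    have hlt' : m i < m' i := lt_of_le_of_ne (hall i) hne'
    have hsum : ∑ j, m j < ∑ j, m' j :=
      Finset.sum_lt_sum (fun j _ => hall j) ⟨i, Finset.mem_univ i, hlt'⟩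
    rw [← degree_eq_univ_sum, ← degree_eq_univ_sum, hdeg] at hsum
    exact lt_irrefl _ hsum
  obtain ⟨i, hi⟩ := hlt
  rw [contract_monomial]
  have h0 : ((m' i).descFactorial (m i) : ℂ) = 0 := by
    rw [Nat.descFactorial_eq_zero_iff_lt.mpr hi, Nat.cast_zero]
  rw [Finset.prod_eq_zero (Finset.mem_univ i) h0, zero_mul, zero_mul, monomial_zero]

lemma isHomogeneous_degree_support {p : MvPolynomial (Fin n) ℂ} {d : ℕ}
    (hp : p.IsHomogeneous d) {m : Fin n →₀ ℕ} (hm : m ∈ p.support) : m.degree = d := by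
  have := hp (MvPolynomial.mem_support_iff.mp hm)
  rw [Finsupp.degree_eq_weight_one]; exact this

/-- Every linear functional on the degree-`d` homogeneous part is realized by apolarity
contraction with a degree-`d` form. -/
lemma exists_contract_realizing (d : ℕ)
    (lam : Module.Dual ℂ (homogeneousSubmodule (Fin n) ℂ d)) :
    ∃ Φ : MvPolynomial (Fin n) ℂ, Φ.IsHomogeneous d ∧
      ∀ F (hF : F.IsHomogeneous d), contract Φ F = C (lam ⟨F, hF⟩) := by
  classical
  set A := Finset.finsuppAntidiag (Finset.univ : Finset (Fin n)) d with hA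
  have hAdeg : ∀ m ∈ A, m.degree = d := by
    intro m hm
    rw [degree_eq_univ_sum]
    exact (Finset.mem_finsuppAntidiag.mp hm).1
  have hAmem : ∀ m : Fin n →₀ ℕ, m.degree = d → m ∈ A := by
    intro m hm
    rw [hA, Finset.mem_finsuppAntidiag]
    exact ⟨by rw [← degree_eq_univ_sum, hm], Finset.subset_univ _⟩
  have hmono : ∀ m ∈ A, (monomial m (1 : ℂ)).IsHomogeneous d := fun m hm =>
    isHomogeneous_monomial 1 (hAdeg m hm)
  have hfact : ∀ m : Fin n →₀ ℕ, (∏ i, ((m i).factorial : ℂ)) ≠ 0 := by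
    intro m
    apply Finset.prod_ne_zero_iff.mpr
    intro i _
    exact_mod_cast Nat.factorial_ne_zero (m i)
  set w : (Fin n →₀ ℕ) → homogeneousSubmodule (Fin n) ℂ d :=
    fun m => if h : m ∈ A then ⟨monomial m 1, hmono m h⟩ else 0 with hwdef
  have hw : ∀ m (h : m ∈ A), (w m : MvPolynomial (Fin n) ℂ) = monomial m 1 := by
    intro m h; rw [hwdef]; simp only [dif_pos h]
  refine ⟨∑ m ∈ A, monomial m ((∏ i, ((m i).factorial : ℂ))⁻¹ * lam (w m)), ?_, ?_⟩
  · rw [← mem_homogeneousSubmodule]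
    apply Submodule.sum_mem
    intro m hm
    rw [mem_homogeneousSubmodule]
    exact isHomogeneous_monomial _ (hAdeg m hm)
  · intro F hF
    have hsupp : ∀ m' ∈ F.support, m' ∈ A := fun m' hm' =>
      hAmem m' (isHomogeneous_degree_support hF hm')
    rw [contract_sum_left]
    have hterm : ∀ m ∈ A,
        contract (monomial m ((∏ i, ((m i).factorial : ℂ))⁻¹ * lam (w m))) F
          = if m ∈ F.support then C (lam (w m) * coeff m F) else 0 := by
      intro m hm
      conv_lhs => rw [F.as_sum, contract_sum_right]
      have hterm' : ∀ m' ∈ F.support,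
          contract (monomial m ((∏ i, ((m i).factorial : ℂ))⁻¹ * lam (w m)))
              (monomial m' (coeff m' F))
            = if m' = m then C (lam (w m) * coeff m' F) else 0 := by
        intro m' hm'
        by_cases h : m' = m
        · subst h
          rw [contract_monomial_self, if_pos rfl]
          congr 1
          have h0 := hfact m'
          field_simp
        · rw [if_neg h]
          exact contract_monomial_ne m m'
            (by rw [hAdeg m hm, isHomogeneous_degree_support hF hm'])
            (fun he => h he.symm) _ _
      rw [Finset.sum_congr rfl hterm', Finset.sum_ite_eq' F.support m
        (fun m' => C (lam (w m) * coeff m' F))]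
    rw [Finset.sum_congr rfl hterm, Finset.sum_ite_mem,
      Finset.inter_eq_right.mpr hsupp, ← map_sum C]
    congr 1
    have hdecomp : (⟨F, hF⟩ : homogeneousSubmodule (Fin n) ℂ d)
        = ∑ m ∈ F.support, (coeff m F) • w m := by
      apply Subtype.ext
      push_cast
      conv_lhs => rw [F.as_sum]
      refine Finset.sum_congr rfl fun m hm => ?_
      rw [hw m (hsupp m hm), smul_monomial, smul_eq_mul, mul_one]
    rw [hdecomp, map_sum]
    refine Finset.sum_congr rfl fun m hm => ?_
    rw [map_smul, smul_eq_mul, mul_comm]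

lemma eq_single_of_degree_one (m : Fin n →₀ ℕ) (h : m.degree = 1) :
    ∃ i, m = Finsupp.single i 1 := by
  classical
  have hne : m.support.Nonempty := by
    rcases Finset.eq_empty_or_nonempty m.support with he | hne
    · exfalso
      rw [Finsupp.degree_apply, he, Finset.sum_empty] at h
      exact one_ne_zero h.symm
    · exact hne
  obtain ⟨i, hi⟩ := hne
  have hmi : 1 ≤ m i := Nat.one_le_iff_ne_zero.mpr (Finsupp.mem_support_iff.mp hi)
  have hle : m i ≤ m.degree := Finset.single_le_sum (fun j _ => Nat.zero_le _) hi
  have hmi1 : m i = 1 := le_antisymm (h ▸ hle) hmi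
  refine ⟨i, ?_⟩
  ext j
  rcases eq_or_ne j i with rfl | hj
  · rw [hmi1, Finsupp.single_eq_same]
  · rw [Finsupp.single_eq_of_ne hj]
    by_contra hj0
    have hjs : j ∈ m.support := Finsupp.mem_support_iff.mpr hj0
    have : 1 + 1 ≤ m.degree := by
      rw [Finsupp.degree_apply, ← Finset.add_sum_erase _ _ hi, hmi1]
      have : 1 ≤ ∑ k ∈ m.support.erase i, m k :=
        le_trans (Nat.one_le_iff_ne_zero.mpr hj0)
          (Finset.single_le_sum (fun k _ => Nat.zero_le _)
            (Finset.mem_erase.mpr ⟨hj, hjs⟩))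
      omega
    omega

lemma mem_span_X_of_isHomogeneous_one {p : MvPolynomial (Fin n) ℂ}
    (hp : p.IsHomogeneous 1) :
    p ∈ Submodule.span ℂ (Set.range (X : Fin n → MvPolynomial (Fin n) ℂ)) := by
  rw [p.as_sum]
  apply Submodule.sum_mem
  intro m hm
  obtain ⟨i, rfl⟩ := eq_single_of_degree_one m (isHomogeneous_degree_support hp hm)
  have : (monomial (Finsupp.single i 1) (coeff (Finsupp.single i 1) p)
      : MvPolynomial (Fin n) ℂ) = (coeff (Finsupp.single i 1) p) • X i := by
    rw [show (X i : MvPolynomial (Fin n) ℂ) = monomial (Finsupp.single i 1) 1 from rfl,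
      smul_monomial, smul_eq_mul, mul_one]
  rw [this]
  exact Submodule.smul_mem _ _ (Submodule.subset_span ⟨i, rfl⟩)

lemma pderiv_eq_C_of_isHomogeneous_one {p : MvPolynomial (Fin n) ℂ}
    (hp : p.IsHomogeneous 1) (i : Fin n) :
    ∃ c : ℂ, pderiv i p = C c := by
  have hmem := mem_span_X_of_isHomogeneous_one hp
  clear hp
  induction hmem using Submodule.span_induction with
  | mem x hx =>
    obtain ⟨j, rfl⟩ := hx
    rcases eq_or_ne i j with rfl | hij
    · exact ⟨1, by rw [pderiv_X_self]; rfl⟩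
    · exact ⟨0, by rw [pderiv_X_of_ne (Ne.symm hij), map_zero]⟩
  | zero => exact ⟨0, by rw [map_zero, map_zero]⟩
  | add x y hx hy ihx ihy =>
    obtain ⟨c, hc⟩ := ihx
    obtain ⟨c', hc'⟩ := ihy
    exact ⟨c + c', by rw [map_add, hc, hc', map_add]⟩
  | smul a x hx ihx =>
    obtain ⟨c, hc⟩ := ihx
    refine ⟨a * c, ?_⟩
    rw [smul_eq_C_mul, pderiv_mul, pderiv_C, zero_mul, zero_add, hc, ← C_mul]

lemma pderiv_mem_adjoin {V : Submodule ℂ (MvPolynomial (Fin n) ℂ)}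
    (hV : V ≤ homogeneousSubmodule (Fin n) ℂ 1) (i : Fin n)
    {G : MvPolynomial (Fin n) ℂ}
    (hG : G ∈ Algebra.adjoin ℂ (V : Set (MvPolynomial (Fin n) ℂ))) :
    pderiv i G ∈ Algebra.adjoin ℂ (V : Set (MvPolynomial (Fin n) ℂ)) := by
  induction hG using Algebra.adjoin_induction with
  | mem v hv =>
    obtain ⟨c, hc⟩ := pderiv_eq_C_of_isHomogeneous_one (hV hv) i
    rw [hc]
    exact Subalgebra.algebraMap_mem _ c
  | algebraMap r =>
    have : (algebraMap ℂ (MvPolynomial (Fin n) ℂ) r) = C r := rfl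
    rw [this, pderiv_C]
    exact Subalgebra.zero_mem _
  | add x y hx hy ihx ihy =>
    rw [map_add]
    exact Subalgebra.add_mem _ ihx ihy
  | mul x y hx hy ihx ihy =>
    rw [pderiv_mul]
    exact Subalgebra.add_mem _ (Subalgebra.mul_mem _ ihx hy)
      (Subalgebra.mul_mem _ hx ihy)

lemma contract_mem_adjoin {V : Submodule ℂ (MvPolynomial (Fin n) ℂ)}
    (hV : V ≤ homogeneousSubmodule (Fin n) ℂ 1) (Θ : MvPolynomial (Fin n) ℂ)
    {G : MvPolynomial (Fin n) ℂ}
    (hG : G ∈ Algebra.adjoin ℂ (V : Set (MvPolynomial (Fin n) ℂ))) :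
    contract Θ G ∈ Algebra.adjoin ℂ (V : Set (MvPolynomial (Fin n) ℂ)) := by
  induction Θ using MvPolynomial.induction_on generalizing G with
  | C a =>
    rw [contract_C_left]
    exact Subalgebra.smul_mem _ hG a
  | add p q hp hq =>
    rw [contract_add_left]
    exact Subalgebra.add_mem _ (hp hG) (hq hG)
  | mul_X p i hp =>
    have : contract (p * X i) G = contract p (pderiv i G) := by
      rw [contract_mul, contract_X]
    rw [this]
    exact hp (pderiv_mem_adjoin hV i hG)

lemma eq_C_of_mem_adjoins {V₁ V₂ : Submodule ℂ (MvPolynomial (Fin n) ℂ)}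
    (hV₁ : V₁ ≤ homogeneousSubmodule (Fin n) ℂ 1)
    (hV₂ : V₂ ≤ homogeneousSubmodule (Fin n) ℂ 1)
    (hdisj : V₁ ⊓ V₂ = ⊥)
    {p : MvPolynomial (Fin n) ℂ}
    (h1 : p ∈ Algebra.adjoin ℂ (V₁ : Set (MvPolynomial (Fin n) ℂ)))
    (h2 : p ∈ Algebra.adjoin ℂ (V₂ : Set (MvPolynomial (Fin n) ℂ))) :
    ∃ c : ℂ, p = C c := by
  classical
  obtain ⟨U₀, hU₀⟩ := Submodule.exists_isCompl (V₁ ⊔ V₂)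
  have hcompl : IsCompl V₂ (V₁ ⊔ U₀) := by
    constructor
    · rw [_root_.disjoint_iff, eq_bot_iff]
      intro x hx
      obtain ⟨hx2, hx1⟩ := Submodule.mem_inf.mp hx
      obtain ⟨a, ha, u, hu, hau⟩ := Submodule.mem_sup.mp hx1
      have hu' : u = x - a := by rw [← hau]; ring
      have humem : u ∈ V₁ ⊔ V₂ := by
        rw [hu']
        exact Submodule.sub_mem _ (Submodule.mem_sup_right hx2)
          (Submodule.mem_sup_left ha)
      have : u = 0 := by
        have := hU₀.symm.disjoint
        rw [_root_.disjoint_iff, eq_bot_iff] at this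
        simpa using this (Submodule.mem_inf.mpr ⟨hu, humem⟩)
      have hxa : x = a := by rw [← hau, this, add_zero]
      have : x ∈ V₁ ⊓ V₂ := Submodule.mem_inf.mpr ⟨hxa ▸ ha, hx2⟩
      rw [hdisj] at this
      simpa using this
    · rw [codisjoint_iff, ← codisjoint_iff.mp hU₀.codisjoint,
        sup_comm V₂ (V₁ ⊔ U₀), sup_assoc V₁ U₀ V₂, sup_comm U₀ V₂, ← sup_assoc]
  set π : MvPolynomial (Fin n) ℂ →ₗ[ℂ] MvPolynomial (Fin n) ℂ :=
    V₂.subtype ∘ₗ Submodule.projectionOnto V₂ (V₁ ⊔ U₀) hcompl with hπdef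
  have hπ2 : ∀ x ∈ V₂, π x = x := by
    intro x hx
    rw [hπdef]
    simp only [LinearMap.coe_comp, Function.comp_apply, Submodule.coe_subtype]
    rw [show x = ((⟨x, hx⟩ : V₂) : MvPolynomial (Fin n) ℂ) from rfl,
      Submodule.linearProjOfIsCompl_apply_left hcompl ⟨x, hx⟩]
  have hπ1 : ∀ x ∈ V₁, π x = 0 := by
    intro x hx
    rw [hπdef]
    simp only [LinearMap.coe_comp, Function.comp_apply, Submodule.coe_subtype]
    rw [Submodule.linearProjOfIsCompl_apply_right' hcompl
      (Submodule.mem_sup_left hx)]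
    rfl
  set φ : MvPolynomial (Fin n) ℂ →ₐ[ℂ] MvPolynomial (Fin n) ℂ :=
    aeval (fun i => π (X i)) with hφdef
  have hφ1 : ∀ q : MvPolynomial (Fin n) ℂ, q.IsHomogeneous 1 → φ q = π q := by
    intro q hq
    have hmem := mem_span_X_of_isHomogeneous_one hq
    clear hq
    induction hmem using Submodule.span_induction with
    | mem x hx =>
      obtain ⟨j, rfl⟩ := hx
      rw [hφdef, aeval_X]
    | zero => rw [map_zero, map_zero]
    | add x y hx hy ihx ihy =>
      rw [map_add, map_add, ihx, ihy]
    | smul a x hx ihx =>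
      rw [map_smul, map_smul, ihx]
  have hfix : ∀ q ∈ Algebra.adjoin ℂ (V₂ : Set (MvPolynomial (Fin n) ℂ)), φ q = q := by
    intro q hq
    induction hq using Algebra.adjoin_induction with
    | mem v hv => rw [hφ1 v (hV₂ hv), hπ2 v hv]
    | algebraMap r => rw [AlgHom.commutes]
    | add x y hx hy ihx ihy => rw [map_add, ihx, ihy]
    | mul x y hx hy ihx ihy => rw [map_mul, ihx, ihy]
  have hkill : ∀ q ∈ Algebra.adjoin ℂ (V₁ : Set (MvPolynomial (Fin n) ℂ)),
      ∃ c : ℂ, φ q = C c := by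
    intro q hq
    induction hq using Algebra.adjoin_induction with
    | mem v hv => exact ⟨0, by rw [hφ1 v (hV₁ hv), hπ1 v hv, map_zero]⟩
    | algebraMap r => exact ⟨r, by rw [AlgHom.commutes]; rfl⟩
    | add x y hx hy ihx ihy =>
      obtain ⟨c, hc⟩ := ihx; obtain ⟨c', hc'⟩ := ihy
      exact ⟨c + c', by rw [map_add, hc, hc', map_add]⟩
    | mul x y hx hy ihx ihy =>
      obtain ⟨c, hc⟩ := ihx; obtain ⟨c', hc'⟩ := ihy
      exact ⟨c * c', by rw [map_mul, hc, hc', map_mul]⟩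
  obtain ⟨c, hc⟩ := hkill p h1
  exact ⟨c, by rw [← hfix p h2, hc]⟩

lemma contract_C_right_eq_zero {Θ : MvPolynomial (Fin n) ℂ}
    (hΘ : Θ ∈ irrIdeal n) (c : ℂ) : contract Θ (C c) = 0 := by
  rw [irrIdeal] at hΘ
  induction hΘ using Submodule.span_induction with
  | mem x hx =>
    obtain ⟨j, rfl⟩ := hx
    rw [contract_X, pderiv_C]
  | zero =>
    rw [show (0 : MvPolynomial (Fin n) ℂ) = C 0 from (map_zero C).symm,
      contract_C_left, zero_smul, map_zero]
  | add x y hx hy ihx ihy => rw [contract_add_left, ihx, ihy, add_zero]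
  | smul a x hx ihx =>
    rw [smul_eq_mul, contract_mul, ihx, contract_zero_right]

lemma exists_dual_family {M : Type*} [AddCommGroup M] [Module ℂ M]
    {ι : Type*} [DecidableEq ι] {v : ι → M} (hv : LinearIndependent ℂ v) :
    ∃ lam : ι → Module.Dual ℂ M,
      ∀ i j, lam i (v j) = if i = j then 1 else 0 := by
  classical
  obtain ⟨U, hU⟩ := Submodule.exists_isCompl (Submodule.span ℂ (Set.range v))
  refine ⟨fun i => (Finsupp.lapply i) ∘ₗ (hv.repr : Submodule.span ℂ (Set.range v) →ₗ[ℂ] ι →₀ ℂ)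
    ∘ₗ Submodule.projectionOnto _ U hU, fun i j => ?_⟩
  have hmem : v j ∈ Submodule.span ℂ (Set.range v) :=
    Submodule.subset_span ⟨j, rfl⟩
  simp only [LinearMap.coe_comp, Function.comp_apply]
  rw [show v j = ((⟨v j, hmem⟩ : Submodule.span ℂ (Set.range v)) : M) from rfl,
    Submodule.linearProjOfIsCompl_apply_left hU ⟨v j, hmem⟩,
    hv.repr_eq_single j ⟨v j, hmem⟩ rfl]
  rw [Finsupp.lapply_apply, Finsupp.single_apply]
  simp [eq_comm]

lemma contract_sub_left (p q F : MvPolynomial (Fin n) ℂ) :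
    contract (p - q) F = contract p F - contract q F := by
  simp only [contract, map_sub, LinearMap.sub_apply]

lemma mem_seriesApolarIdeal {W : Submodule ℂ (MvPolynomial (Fin n) ℂ)}
    {Θ : MvPolynomial (Fin n) ℂ} :
    Θ ∈ seriesApolarIdeal W ↔ ∀ F ∈ W, contract Θ F = 0 := by
  simp only [seriesApolarIdeal, Ideal.mem_iInf, mem_apolarIdeal]

end Helpers

/-- If a linear series `W ⊆ S^d V` admits a direct sum decomposition
(`V = V₁ ⊕ V₂`, `W ⊆ W₁ ⊕ W₂` with `W_i ⊆ S^d V_i` and both projections `W → W_i`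
isomorphisms), then `W^⊥` has at least `dim_ℂ W` minimal generators of degree `d`. -/
theorem linear_series_direct_sum_generators
    (n d : ℕ) (W W₁ W₂ V₁ V₂ : Submodule ℂ (MvPolynomial (Fin n) ℂ))
    (hW : W ≤ homogeneousSubmodule (Fin n) ℂ d)
    (hV₁ : V₁ ≤ homogeneousSubmodule (Fin n) ℂ 1)
    (hV₂ : V₂ ≤ homogeneousSubmodule (Fin n) ℂ 1)
    (hVdisj : V₁ ⊓ V₂ = ⊥)
    (hVsup : V₁ ⊔ V₂ = homogeneousSubmodule (Fin n) ℂ 1)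
    (hW₁ : ∀ w ∈ W₁, MvPolynomial.IsHomogeneous w d ∧
      w ∈ Algebra.adjoin ℂ (V₁ : Set (MvPolynomial (Fin n) ℂ)))
    (hW₂ : ∀ w ∈ W₂, MvPolynomial.IsHomogeneous w d ∧
      w ∈ Algebra.adjoin ℂ (V₂ : Set (MvPolynomial (Fin n) ℂ)))
    (hWdisj : W₁ ⊓ W₂ = ⊥)
    (hWle : W ≤ W₁ ⊔ W₂)
    (hker₁ : W ⊓ W₂ = ⊥)
    (hker₂ : W ⊓ W₁ = ⊥)
    (hsurj₁ : ∀ w₁ ∈ W₁, ∃ w₂ ∈ W₂, w₁ + w₂ ∈ W)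
    (hsurj₂ : ∀ w₂ ∈ W₂, ∃ w₁ ∈ W₁, w₁ + w₂ ∈ W) :
    MinGensAtLeast (seriesApolarIdeal W) d (Module.finrank ℂ W) := by
  classical
  haveI hWfd : FiniteDimensional ℂ W := by
    refine Submodule.finiteDimensional_of_le (S₂ := restrictTotalDegree (Fin n) ℂ d) ?_
    intro p hp
    exact (mem_restrictTotalDegree _ _ _).mpr
      (MvPolynomial.IsHomogeneous.totalDegree_le ((mem_homogeneousSubmodule _ _).mp (hW hp)))
  set r := Module.finrank ℂ W with hr
  let b : Module.Basis (Fin r) ℂ W := Module.finBasis ℂ W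
  have hdec : ∀ j : Fin r, ∃ g, g ∈ W₁ ∧ ∃ h, h ∈ W₂ ∧
      g + h = (b j : MvPolynomial (Fin n) ℂ) :=
    fun j => Submodule.mem_sup.mp (hWle (b j).2)
  choose G hG H hH hGH using hdec
  have hGhom : ∀ j, (G j).IsHomogeneous d := fun j => (hW₁ _ (hG j)).1
  have hHhom : ∀ j, (H j).IsHomogeneous d := fun j => (hW₂ _ (hH j)).1
  set v : Fin r ⊕ Fin r → homogeneousSubmodule (Fin n) ℂ d :=
    Sum.elim (fun j => ⟨G j, (mem_homogeneousSubmodule d (G j)).mpr (hGhom j)⟩)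
      (fun j => ⟨H j, (mem_homogeneousSubmodule d (H j)).mpr (hHhom j)⟩) with hvdef
  have hWindep : ∀ a : Fin r → ℂ, (∑ j, a j • (b j : MvPolynomial (Fin n) ℂ)) = 0 →
      ∀ j, a j = 0 := by
    intro a ha j
    have hsum : (((∑ j, a j • b j : W)) : MvPolynomial (Fin n) ℂ) = 0 := by
      push_cast
      exact ha
    have : (∑ j, a j • b j : W) = 0 := by
      exact Subtype.ext hsum
    exact Fintype.linearIndependent_iff.mp b.linearIndependent a this j
  have hv : LinearIndependent ℂ v := by
    rw [Fintype.linearIndependent_iff]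
    intro c hc
    have hc0 : (∑ j, c (Sum.inl j) • G j) + (∑ j, c (Sum.inr j) • H j) = 0 := by
      have h1 := congrArg
        (fun x : homogeneousSubmodule (Fin n) ℂ d => (x : MvPolynomial (Fin n) ℂ)) hc
      simpa [hvdef, Fintype.sum_sum_type] using h1
    have hg : (∑ j, c (Sum.inl j) • G j) ∈ W₁ :=
      Submodule.sum_mem _ fun j _ => Submodule.smul_mem _ _ (hG j)
    have hh : (∑ j, c (Sum.inr j) • H j) ∈ W₂ :=
      Submodule.sum_mem _ fun j _ => Submodule.smul_mem _ _ (hH j)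
    have hgmem : (∑ j, c (Sum.inl j) • G j) ∈ W₁ ⊓ W₂ := by
      refine Submodule.mem_inf.mpr ⟨hg, ?_⟩
      have : (∑ j, c (Sum.inl j) • G j) = -(∑ j, c (Sum.inr j) • H j) :=
        eq_neg_of_add_eq_zero_left hc0
      rw [this]
      exact neg_mem hh
    rw [hWdisj, Submodule.mem_bot] at hgmem
    have hhmem : (∑ j, c (Sum.inr j) • H j) = 0 := by
      rw [hgmem, zero_add] at hc0
      exact hc0
    have hFl : (∑ j, c (Sum.inl j) • (b j : MvPolynomial (Fin n) ℂ))
        = ∑ j, c (Sum.inl j) • H j := by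
      rw [show (∑ j, c (Sum.inl j) • (b j : MvPolynomial (Fin n) ℂ))
          = ∑ j, c (Sum.inl j) • (G j + H j) from
        Finset.sum_congr rfl fun j _ => by rw [hGH j], ]
      rw [show (∑ j, c (Sum.inl j) • (G j + H j))
          = (∑ j, c (Sum.inl j) • G j) + ∑ j, c (Sum.inl j) • H j from by
        rw [← Finset.sum_add_distrib]
        exact Finset.sum_congr rfl fun j _ => smul_add _ _ _]
      rw [hgmem, zero_add]
    have hFr : (∑ j, c (Sum.inr j) • (b j : MvPolynomial (Fin n) ℂ))
        = ∑ j, c (Sum.inr j) • G j := by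
      rw [show (∑ j, c (Sum.inr j) • (b j : MvPolynomial (Fin n) ℂ))
          = ∑ j, c (Sum.inr j) • (G j + H j) from
        Finset.sum_congr rfl fun j _ => by rw [hGH j], ]
      rw [show (∑ j, c (Sum.inr j) • (G j + H j))
          = (∑ j, c (Sum.inr j) • G j) + ∑ j, c (Sum.inr j) • H j from by
        rw [← Finset.sum_add_distrib]
        exact Finset.sum_congr rfl fun j _ => smul_add _ _ _]
      rw [hhmem, add_zero]
    have hl0 : (∑ j, c (Sum.inl j) • (b j : MvPolynomial (Fin n) ℂ)) = 0 := by
      have hmemW : (∑ j, c (Sum.inl j) • (b j : MvPolynomial (Fin n) ℂ)) ∈ W :=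
        Submodule.sum_mem _ fun j _ => Submodule.smul_mem _ _ (b j).2
      have hmemW₂ : (∑ j, c (Sum.inl j) • (b j : MvPolynomial (Fin n) ℂ)) ∈ W₂ := by
        rw [hFl]
        exact Submodule.sum_mem _ fun j _ => Submodule.smul_mem _ _ (hH j)
      have : (∑ j, c (Sum.inl j) • (b j : MvPolynomial (Fin n) ℂ)) ∈ W ⊓ W₂ :=
        Submodule.mem_inf.mpr ⟨hmemW, hmemW₂⟩
      rwa [hker₁, Submodule.mem_bot] at this
    have hr0 : (∑ j, c (Sum.inr j) • (b j : MvPolynomial (Fin n) ℂ)) = 0 := by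
      have hmemW : (∑ j, c (Sum.inr j) • (b j : MvPolynomial (Fin n) ℂ)) ∈ W :=
        Submodule.sum_mem _ fun j _ => Submodule.smul_mem _ _ (b j).2
      have hmemW₁ : (∑ j, c (Sum.inr j) • (b j : MvPolynomial (Fin n) ℂ)) ∈ W₁ := by
        rw [hFr]
        exact Submodule.sum_mem _ fun j _ => Submodule.smul_mem _ _ (hG j)
      have : (∑ j, c (Sum.inr j) • (b j : MvPolynomial (Fin n) ℂ)) ∈ W ⊓ W₁ :=
        Submodule.mem_inf.mpr ⟨hmemW, hmemW₁⟩
      rwa [hker₂, Submodule.mem_bot] at this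
    intro i
    cases i with
    | inl j => exact hWindep _ hl0 j
    | inr j => exact hWindep _ hr0 j
  obtain ⟨lam, hlam⟩ := exists_dual_family hv
  choose Φ hΦhom hΦ using fun i : Fin r ⊕ Fin r => exists_contract_realizing d (lam i)
  set Θ : Fin r → MvPolynomial (Fin n) ℂ :=
    fun i => Φ (Sum.inl i) - Φ (Sum.inr i) with hΘdef
  have hvalG : ∀ (i : Fin r ⊕ Fin r) (j : Fin r),
      contract (Φ i) (G j) = C (lam i (v (Sum.inl j))) :=
    fun i j => hΦ i (G j) (hGhom j)
  have hvalH : ∀ (i : Fin r ⊕ Fin r) (j : Fin r),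
      contract (Φ i) (H j) = C (lam i (v (Sum.inr j))) :=
    fun i j => hΦ i (H j) (hHhom j)
  have hΘG : ∀ i j, contract (Θ i) (G j) = C (if i = j then 1 else 0) := by
    intro i j
    rw [hΘdef]
    rw [contract_sub_left, hvalG (Sum.inl i) j, hvalG (Sum.inr i) j,
      hlam (Sum.inl i) (Sum.inl j), hlam (Sum.inr i) (Sum.inl j)]
    simp
  have hΘH : ∀ i j, contract (Θ i) (H j) = - C (if i = j then 1 else 0) := by
    intro i j
    rw [hΘdef]
    rw [contract_sub_left, hvalH (Sum.inl i) j, hvalH (Sum.inr i) j,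
      hlam (Sum.inl i) (Sum.inr j), hlam (Sum.inr i) (Sum.inr j)]
    simp
  have hΘb : ∀ (i : Fin r) (j : Fin r),
      contract (Θ i) ((b j : MvPolynomial (Fin n) ℂ)) = 0 := by
    intro i j
    rw [← hGH j, contract_add_right, hΘG, hΘH]
    ring
  have hΘmem : ∀ i, Θ i ∈ seriesApolarIdeal W := by
    intro i
    rw [mem_seriesApolarIdeal]
    intro F hF
    have hFsum : F = ∑ j, (b.repr ⟨F, hF⟩ j) • (b j : MvPolynomial (Fin n) ℂ) := by
      have h1 := b.sum_repr ⟨F, hF⟩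
      have h2 := congrArg (fun x : W => (x : MvPolynomial (Fin n) ℂ)) h1
      simp only at h2
      have h3 : ((∑ i, (b.repr ⟨F, hF⟩) i • b i : W) : MvPolynomial (Fin n) ℂ)
          = ∑ i, (b.repr ⟨F, hF⟩) i • (b i : MvPolynomial (Fin n) ℂ) := by
        push_cast
        rfl
      exact h2.symm.trans h3
    rw [hFsum, contract_sum_right]
    refine Finset.sum_eq_zero fun j _ => ?_
    rw [contract_smul_right, hΘb i j, smul_zero]
  have hΘhom : ∀ i, (Θ i).IsHomogeneous d := by
    intro i
    rw [hΘdef, ← mem_homogeneousSubmodule]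
    exact Submodule.sub_mem _
      ((mem_homogeneousSubmodule _ _).mpr (hΦhom (Sum.inl i)))
      ((mem_homogeneousSubmodule _ _).mpr (hΦhom (Sum.inr i)))
  refine ⟨Θ, fun i => ⟨hΘmem i, hΘhom i⟩, ?_⟩
  intro c hc j
  have key : ∀ z ∈ irrIdeal n * seriesApolarIdeal W, contract z (G j) = 0 := by
    intro z hz
    refine Submodule.mul_induction_on hz ?_ ?_
    · intro a ha Ξ hΞ
      have h0 : contract Ξ ((b j : MvPolynomial (Fin n) ℂ)) = 0 :=
        mem_seriesApolarIdeal.mp hΞ _ (b j).2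
      have hsum : contract Ξ (G j) + contract Ξ (H j) = 0 := by
        rw [← contract_add_right, hGH j, h0]
      have hA1 : contract Ξ (G j) ∈ Algebra.adjoin ℂ (V₁ : Set (MvPolynomial (Fin n) ℂ)) :=
        contract_mem_adjoin hV₁ Ξ (hW₁ _ (hG j)).2
      have hA2 : contract Ξ (G j) ∈ Algebra.adjoin ℂ (V₂ : Set (MvPolynomial (Fin n) ℂ)) := by
        rw [eq_neg_of_add_eq_zero_left hsum]
        exact neg_mem (contract_mem_adjoin hV₂ Ξ (hW₂ _ (hH j)).2)
      obtain ⟨e, he⟩ := eq_C_of_mem_adjoins hV₁ hV₂ hVdisj hA1 hA2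
      rw [contract_mul, he, contract_C_right_eq_zero ha]
    · intro x y hx hy
      rw [contract_add_left, hx, hy, add_zero]
  have h1 : contract (∑ i, c i • Θ i) (G j) = C (c j) := by
    rw [contract_sum_left]
    have hterm : ∀ i ∈ Finset.univ, contract (c i • Θ i) (G j)
        = if i = j then C (c i) else 0 := by
      intro i _
      rw [contract_smul_left, hΘG i j]
      by_cases h : i = j
      · rw [if_pos h, if_pos h, smul_eq_C_mul, ← C_mul, mul_one]
      · rw [if_neg h, if_neg h, map_zero, smul_zero]
    rw [Finset.sum_congr rfl hterm, Finset.sum_ite_eq' Finset.univ j (fun i => C (c i)),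
      if_pos (Finset.mem_univ j)]
  rw [key _ hc] at h1
  have h2 : (C (c j) : MvPolynomial (Fin n) ℂ) = C 0 := by rw [map_zero, ← h1]
  exact MvPolynomial.C_injective _ _ h2
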